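/- Let d ∈ {1,2,3}, κ ≥ 0, μ > d + 1/2 + κ, and suppose the scalar bounds c̃(1+z)^{−(d+1+2κ)} ≤ Ŵ_{μ,κ,β}(z) ≤ c̃'(1+z)^{−(d+1+2κ)} hold for each β ∈ {β₁₁, β₂₂, β₁₂} with constants 0 < c̃ < c̃' depending on β. Define the bivariate spectral matrix F(λ) with F_{ij}(λ) = ρ_{ij}σ_{ii}σ_{jj} Ŵ_{μ,κ,β_{ij}}(‖λ‖), ρ₁₁ = ρ₂₂ = 1, σ₁₁, σ₂₂ > 0. If ρ₁₂² < inf_{z≥0} Ŵ_{μ,κ,β₁₁}(z) Ŵ_{μ,κ,β₂₂}(z) / Ŵ_{μ,κ,β₁₂}(z)², then there exist 0 < c < c' < ∞ with c(1+‖λ‖)^{−(d+1+2κ)} I₂ ≤ F(λ) ≤ c'(1+‖λ‖)^{−(d+1+2κ)} I₂ for all λ ∈ ℝ^d. -/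

import Mathlib

open Matrix

lemma psd2 {a b e : ℝ} (ha : 0 ≤ a) (he : 0 ≤ e) (hdet : b ^ 2 ≤ a * e) :
    (!![a, b; b, e] : Matrix (Fin 2) (Fin 2) ℝ).PosSemidef := by
  rw [Matrix.posSemidef_iff_dotProduct_mulVec]
  constructor
  · ext i j; fin_cases i <;> fin_cases j <;> simp
  · intro x
    simp only [dotProduct, mulVec, Fin.sum_univ_two, Matrix.cons_val_zero, Matrix.cons_val_one,
      Matrix.head_cons, Matrix.of_apply, Pi.star_apply, star_trivial]
    by_cases ha0 : a = 0
    · have hb : b = 0 := by nlinarith [sq_nonneg b]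
      subst ha0 hb; nlinarith [sq_nonneg (x 1)]
    · have ha' : 0 < a := lt_of_le_of_ne ha (Ne.symm ha0)
      nlinarith [sq_nonneg (a * x 0 + b * x 1), mul_nonneg (sub_nonneg.2 hdet) (sq_nonneg (x 1))]

lemma msub1 (a b c e s : ℝ) :
    (!![a, b; c, e] : Matrix (Fin 2) (Fin 2) ℝ) - s • (1 : Matrix (Fin 2) (Fin 2) ℝ) =
      !![a - s, b; c, e - s] := by
  ext i j; fin_cases i <;> fin_cases j <;> simp [Matrix.one_apply]

lemma msub2 (a b c e s : ℝ) :
    s • (1 : Matrix (Fin 2) (Fin 2) ℝ) - (!![a, b; c, e] : Matrix (Fin 2) (Fin 2) ℝ) =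
      !![s - a, -b; -c, s - e] := by
  ext i j; fin_cases i <;> fin_cases j <;> simp [Matrix.one_apply]

/-- Under two-sided polynomial decay bounds on the Generalized Wendland spectral densities
and the strict infimum condition on the colocated correlation, the bivariate Generalized
Wendland spectral matrix is sandwiched, in the Loewner order, between constant multiples of
`(1+‖λ‖)^{−(d+1+2κ)} I₂`. -/
theorem stmt17 (d : ℕ) (hd : d ∈ ({1, 2, 3} : Set ℕ)) (κ μ : ℝ) (hκ : 0 ≤ κ)
    (hμ : μ > d + 1 / 2 + κ) (σ₁₁ σ₂₂ ρ₁₂ : ℝ) (hσ₁₁ : 0 < σ₁₁) (hσ₂₂ : 0 < σ₂₂)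
    (W₁₁ W₂₂ W₁₂ : ℝ → ℝ)
    (hW₁₁ : ∃ c c' : ℝ, 0 < c ∧ c < c' ∧ ∀ z : ℝ, 0 ≤ z →
      c * (1 + z) ^ (-(d + 1 + 2 * κ)) ≤ W₁₁ z ∧ W₁₁ z ≤ c' * (1 + z) ^ (-(d + 1 + 2 * κ)))
    (hW₂₂ : ∃ c c' : ℝ, 0 < c ∧ c < c' ∧ ∀ z : ℝ, 0 ≤ z →
      c * (1 + z) ^ (-(d + 1 + 2 * κ)) ≤ W₂₂ z ∧ W₂₂ z ≤ c' * (1 + z) ^ (-(d + 1 + 2 * κ)))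
    (hW₁₂ : ∃ c c' : ℝ, 0 < c ∧ c < c' ∧ ∀ z : ℝ, 0 ≤ z →
      c * (1 + z) ^ (-(d + 1 + 2 * κ)) ≤ W₁₂ z ∧ W₁₂ z ≤ c' * (1 + z) ^ (-(d + 1 + 2 * κ)))
    (hcond : ρ₁₂ ^ 2 < ⨅ z : Set.Ici (0 : ℝ),
      W₁₁ (z : ℝ) * W₂₂ (z : ℝ) / W₁₂ (z : ℝ) ^ 2) :
    ∃ c c' : ℝ, 0 < c ∧ c < c' ∧ ∀ lam : EuclideanSpace ℝ (Fin d),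
      ((!![σ₁₁ * σ₁₁ * W₁₁ ‖lam‖, ρ₁₂ * σ₁₁ * σ₂₂ * W₁₂ ‖lam‖;
          ρ₁₂ * σ₁₁ * σ₂₂ * W₁₂ ‖lam‖, σ₂₂ * σ₂₂ * W₂₂ ‖lam‖] : Matrix (Fin 2) (Fin 2) ℝ) -
        (c * (1 + ‖lam‖) ^ (-(d + 1 + 2 * κ))) • (1 : Matrix (Fin 2) (Fin 2) ℝ)).PosSemidef ∧
      ((c' * (1 + ‖lam‖) ^ (-(d + 1 + 2 * κ))) • (1 : Matrix (Fin 2) (Fin 2) ℝ) -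
        !![σ₁₁ * σ₁₁ * W₁₁ ‖lam‖, ρ₁₂ * σ₁₁ * σ₂₂ * W₁₂ ‖lam‖;
          ρ₁₂ * σ₁₁ * σ₂₂ * W₁₂ ‖lam‖, σ₂₂ * σ₂₂ * W₂₂ ‖lam‖]).PosSemidef := by

  obtain ⟨a₁, a₁', ha₁, ha₁', hb₁⟩ := hW₁₁
  obtain ⟨a₂, a₂', ha₂, ha₂', hb₂⟩ := hW₂₂
  obtain ⟨a₃, a₃', ha₃, ha₃', hb₃⟩ := hW₁₂
  have ha₁'p : 0 < a₁' := ha₁.trans ha₁'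
  have ha₂'p : 0 < a₂' := ha₂.trans ha₂'
  have ha₃'p : 0 < a₃' := ha₃.trans ha₃'
  set p : ℝ := -((d : ℝ) + 1 + 2 * κ) with hp
  set r : ℝ := ⨅ z : Set.Ici (0 : ℝ), W₁₁ (z : ℝ) * W₂₂ (z : ℝ) / W₁₂ (z : ℝ) ^ 2 with hrdef
  have htpos : ∀ z : ℝ, 0 ≤ z → 0 < (1 + z) ^ p := fun z hz =>
    Real.rpow_pos_of_pos (by linarith) p
  have hbdd : BddBelow (Set.range fun z : Set.Ici (0 : ℝ) =>
      W₁₁ (z : ℝ) * W₂₂ (z : ℝ) / W₁₂ (z : ℝ) ^ 2) := by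
    refine ⟨0, ?_⟩
    rintro _ ⟨z, rfl⟩
    have h1 : 0 ≤ W₁₁ (z : ℝ) :=
      le_trans (le_of_lt (mul_pos ha₁ (htpos _ z.2))) (hb₁ _ z.2).1
    have h2 : 0 ≤ W₂₂ (z : ℝ) :=
      le_trans (le_of_lt (mul_pos ha₂ (htpos _ z.2))) (hb₂ _ z.2).1
    exact div_nonneg (mul_nonneg h1 h2) (sq_nonneg _)
  have hinf : ∀ z : ℝ, 0 ≤ z → r ≤ W₁₁ z * W₂₂ z / W₁₂ z ^ 2 := fun z hz =>
    ciInf_le hbdd (⟨z, hz⟩ : Set.Ici (0 : ℝ))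
  have hrρ : ρ₁₂ ^ 2 < r := hcond
  have hrρ' : 0 < r - ρ₁₂ ^ 2 := by linarith
  clear_value r
  -- constants
  set D : ℝ := σ₁₁ ^ 2 * σ₂₂ ^ 2 * (r - ρ₁₂ ^ 2) * a₃ ^ 2 with hD
  set S : ℝ := σ₁₁ ^ 2 * a₁' + σ₂₂ ^ 2 * a₂' with hS
  have hDpos : 0 < D := by
    rw [hD]
    exact mul_pos (mul_pos (mul_pos (pow_pos hσ₁₁ 2) (pow_pos hσ₂₂ 2)) hrρ') (pow_pos ha₃ 2)
  have hSpos : 0 < S := by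
    rw [hS]
    exact add_pos (mul_pos (pow_pos hσ₁₁ 2) ha₁'p) (mul_pos (pow_pos hσ₂₂ 2) ha₂'p)
  clear_value D S
  set c : ℝ := min (min (σ₁₁ ^ 2 * a₁) (σ₂₂ ^ 2 * a₂)) (D / S) / 2 with hc
  have hcpos : 0 < c := by
    have h := lt_min (lt_min (mul_pos (pow_pos hσ₁₁ 2) ha₁) (mul_pos (pow_pos hσ₂₂ 2) ha₂))
      (div_pos hDpos hSpos)
    rw [hc]; linarith
  have hcα : 2 * c ≤ σ₁₁ ^ 2 * a₁ := by
    have h1 := min_le_left (min (σ₁₁ ^ 2 * a₁) (σ₂₂ ^ 2 * a₂)) (D / S)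
    have h2 := min_le_left (σ₁₁ ^ 2 * a₁) (σ₂₂ ^ 2 * a₂)
    rw [hc]; linarith
  have hcε : 2 * c ≤ σ₂₂ ^ 2 * a₂ := by
    have h1 := min_le_left (min (σ₁₁ ^ 2 * a₁) (σ₂₂ ^ 2 * a₂)) (D / S)
    have h2 := min_le_right (σ₁₁ ^ 2 * a₁) (σ₂₂ ^ 2 * a₂)
    rw [hc]; linarith
  have hcS : 2 * c * S ≤ D := by
    have h2 : 2 * c ≤ D / S := by
      have h1 := min_le_right (min (σ₁₁ ^ 2 * a₁) (σ₂₂ ^ 2 * a₂)) (D / S)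
      rw [hc]; linarith
    have h3 : 2 * c * S ≤ D / S * S := mul_le_mul_of_nonneg_right h2 hSpos.le
    rwa [div_mul_cancel₀ D hSpos.ne'] at h3
  clear_value c
  set B' : ℝ := |ρ₁₂| * σ₁₁ * σ₂₂ * a₃' with hB'
  have hB'nonneg : 0 ≤ B' := by
    rw [hB']
    exact mul_nonneg (mul_nonneg (mul_nonneg (abs_nonneg _) hσ₁₁.le) hσ₂₂.le) ha₃'p.le
  have hBsq : B' ^ 2 = ρ₁₂ ^ 2 * σ₁₁ ^ 2 * σ₂₂ ^ 2 * a₃' ^ 2 := by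
    rw [hB', mul_pow, mul_pow, mul_pow, sq_abs]
  clear_value B'
  set c' : ℝ := max (σ₁₁ ^ 2 * a₁') (σ₂₂ ^ 2 * a₂') + B' + c + 1 with hc'
  have hmaxnn : 0 ≤ max (σ₁₁ ^ 2 * a₁') (σ₂₂ ^ 2 * a₂') :=
    le_trans (mul_pos (pow_pos hσ₁₁ 2) ha₁'p).le (le_max_left _ _)
  have hcc' : c < c' := by rw [hc']; linarith
  have hA'le : σ₁₁ ^ 2 * a₁' + B' + 1 ≤ c' := by
    have h := le_max_left (σ₁₁ ^ 2 * a₁') (σ₂₂ ^ 2 * a₂')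
    rw [hc']; linarith [hcpos.le]
  have hE'le : σ₂₂ ^ 2 * a₂' + B' + 1 ≤ c' := by
    have h := le_max_right (σ₁₁ ^ 2 * a₁') (σ₂₂ ^ 2 * a₂')
    rw [hc']; linarith [hcpos.le]
  clear_value c'
  refine ⟨c, c', hcpos, hcc', fun lam => ?_⟩
  set z : ℝ := ‖lam‖ with hzdef
  have hz : 0 ≤ z := norm_nonneg _
  set t : ℝ := (1 + z) ^ p with ht
  have htp : 0 < t := htpos z hz
  have h11l : a₁ * t ≤ W₁₁ z := (hb₁ z hz).1
  have h11u : W₁₁ z ≤ a₁' * t := (hb₁ z hz).2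
  have h22l : a₂ * t ≤ W₂₂ z := (hb₂ z hz).1
  have h22u : W₂₂ z ≤ a₂' * t := (hb₂ z hz).2
  have h12l : a₃ * t ≤ W₁₂ z := (hb₃ z hz).1
  have h12u : W₁₂ z ≤ a₃' * t := (hb₃ z hz).2
  have hW12pos : 0 < W₁₂ z := lt_of_lt_of_le (mul_pos ha₃ htp) h12l
  have hdet0 : r * W₁₂ z ^ 2 ≤ W₁₁ z * W₂₂ z :=
    (le_div_iff₀ (pow_pos hW12pos 2)).mp (hinf z hz)
  clear_value t
  have h11u' : σ₁₁ ^ 2 * W₁₁ z ≤ σ₁₁ ^ 2 * (a₁' * t) :=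
    mul_le_mul_of_nonneg_left h11u (sq_nonneg σ₁₁)
  have h22u' : σ₂₂ ^ 2 * W₂₂ z ≤ σ₂₂ ^ 2 * (a₂' * t) :=
    mul_le_mul_of_nonneg_left h22u (sq_nonneg σ₂₂)
  constructor
  · -- lower bound
    rw [msub1]
    have hapos : 0 ≤ σ₁₁ * σ₁₁ * W₁₁ z - c * t := by
      have h1 := mul_le_mul_of_nonneg_right hcα htp.le
      have h2 := mul_le_mul_of_nonneg_left h11l (sq_nonneg σ₁₁)
      have h3 := mul_nonneg hcpos.le htp.le
      linarith [h1, h2, h3]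
    have hepos : 0 ≤ σ₂₂ * σ₂₂ * W₂₂ z - c * t := by
      have h1 := mul_le_mul_of_nonneg_right hcε htp.le
      have h2 := mul_le_mul_of_nonneg_left h22l (sq_nonneg σ₂₂)
      have h3 := mul_nonneg hcpos.le htp.le
      linarith [h1, h2, h3]
    refine psd2 hapos hepos ?_
    have hsq : (a₃ * t) ^ 2 ≤ W₁₂ z ^ 2 :=
      pow_le_pow_left₀ (mul_pos ha₃ htp).le h12l 2
    have hQ : (r - ρ₁₂ ^ 2) * (a₃ * t) ^ 2 ≤ W₁₁ z * W₂₂ z - ρ₁₂ ^ 2 * W₁₂ z ^ 2 := by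
      have h2 := mul_le_mul_of_nonneg_left hsq hrρ'.le
      linarith [hdet0, h2]
    have hP : D * t ^ 2 ≤ σ₁₁ ^ 2 * σ₂₂ ^ 2 * (W₁₁ z * W₂₂ z - ρ₁₂ ^ 2 * W₁₂ z ^ 2) := by
      have h := mul_le_mul_of_nonneg_left hQ
        (mul_nonneg (sq_nonneg σ₁₁) (sq_nonneg σ₂₂))
      rw [hD]; linarith [h]
    have hsum : c * t * (σ₁₁ * σ₁₁ * W₁₁ z + σ₂₂ * σ₂₂ * W₂₂ z) ≤ D / 2 * t ^ 2 := by
      have h1 : σ₁₁ * σ₁₁ * W₁₁ z + σ₂₂ * σ₂₂ * W₂₂ z ≤ S * t := by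
        rw [hS]; linarith [h11u', h22u']
      have h2 := mul_le_mul_of_nonneg_left h1 (mul_nonneg hcpos.le htp.le)
      have h3 := mul_le_mul_of_nonneg_right hcS (sq_nonneg t)
      linarith [h2, h3]
    linarith [hP, hsum, sq_nonneg (c * t), mul_nonneg hDpos.le (sq_nonneg t)]
  · -- upper bound
    rw [msub2]
    have hau : B' * t ≤ c' * t - σ₁₁ * σ₁₁ * W₁₁ z := by
      have h2 := mul_le_mul_of_nonneg_right hA'le htp.le
      linarith [h2, h11u', htp.le]
    have heu : B' * t ≤ c' * t - σ₂₂ * σ₂₂ * W₂₂ z := by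
      have h2 := mul_le_mul_of_nonneg_right hE'le htp.le
      linarith [h2, h22u', htp.le]
    have hBt : 0 ≤ B' * t := mul_nonneg hB'nonneg htp.le
    refine psd2 (le_trans hBt hau) (le_trans hBt heu) ?_
    have hsq : W₁₂ z ^ 2 ≤ (a₃' * t) ^ 2 :=
      pow_le_pow_left₀ hW12pos.le h12u 2
    have hmul := mul_le_mul_of_nonneg_left hsq
      (by positivity : (0:ℝ) ≤ ρ₁₂ ^ 2 * σ₁₁ ^ 2 * σ₂₂ ^ 2)
    have hb2 : (-(ρ₁₂ * σ₁₁ * σ₂₂ * W₁₂ z)) ^ 2 ≤ (B' * t) ^ 2 := by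
      have hBt2 : (B' * t) ^ 2 = ρ₁₂ ^ 2 * σ₁₁ ^ 2 * σ₂₂ ^ 2 * (a₃' * t) ^ 2 := by
        rw [mul_pow, hBsq]; ring
      rw [hBt2]; linarith [hmul]
    have hprod := mul_le_mul hau heu hBt (le_trans hBt hau)
    linarith [hb2, hprod]
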